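/- Tower-rule equivalence of nested conditional means (Lemma 1 of the paper, discrete case): if the sampling indicator R is conditionally independent of S given (W, A, C, CY), then E[ E[ f(W,S) | W, A, C, CY ] | A = a₂, W ] = E[ E[ f(W,S) | R = 1, W, A, C, CY ] | A = a₂, W ] almost surely, for any bounded measurable function f. In particular, with f(W,S) = E[Y | A = a₁, W, S], the quantity Q̄_{Q̄_Y(W,S)}(W) = E[Q̄_Y(W,S) | A = a₂, W] equals Q̃_{Q̃(W,A,C,CY)}(W) = E[ E[Q̄_Y(W,S) | R = 1, W, A, C, CY] | A = a₂, W]. -/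

import Mathlib

open scoped Classical BigOperators

/-- Probability of an event under a mass function `p` on a finite space. -/
noncomputable def Pr {Ω : Type*} [Fintype Ω] (p : Ω → ℝ) (E : Ω → Prop) : ℝ :=
  ∑ ω, if E ω then p ω else 0

/-- Expectation. -/
noncomputable def Ex {Ω : Type*} [Fintype Ω] (p : Ω → ℝ) (X : Ω → ℝ) : ℝ :=
  ∑ ω, p ω * X ω

/-- Conditional expectation `E[X | E]`. -/
noncomputable def CEx {Ω : Type*} [Fintype Ω] (p : Ω → ℝ) (X : Ω → ℝ) (E : Ω → Prop) : ℝ :=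
  (∑ ω, if E ω then p ω * X ω else 0) / Pr p E

/-- Conditional probability `P(E | F)`. -/
noncomputable def CPr {Ω : Type*} [Fintype Ω] (p : Ω → ℝ) (E F : Ω → Prop) : ℝ :=
  Pr p (fun ω => E ω ∧ F ω) / Pr p F

/-- The event `{W = W ω₀, A = A ω₀, C = C ω₀, CY = C ω₀ * Y ω₀}`, i.e. the
conditioning event `V = V(ω₀)` with `V = (W, A, C, CY)`. -/
def Vev {Ω 𝕎 : Type*} (W : Ω → 𝕎) (A C Y : Ω → Bool) (ω₀ ω : Ω) : Prop :=
  W ω = W ω₀ ∧ A ω = A ω₀ ∧ C ω = C ω₀ ∧ (C ω && Y ω) = (C ω₀ && Y ω₀)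

lemma Pr_congr {Ω : Type*} [Fintype Ω] (p : Ω → ℝ) {E F : Ω → Prop}
    (h : ∀ ω, E ω ↔ F ω) : Pr p E = Pr p F := by
  unfold Pr
  exact Finset.sum_congr rfl fun ω _ => if_congr (h ω) rfl rfl

lemma CEx_congr {Ω : Type*} [Fintype Ω] (p : Ω → ℝ) {X X' : Ω → ℝ} (E : Ω → Prop)
    (h : ∀ ω, E ω → X ω = X' ω) : CEx p X E = CEx p X' E := by
  unfold CEx
  congr 1
  refine Finset.sum_congr rfl fun ω _ => ?_
  by_cases hE : E ω
  · simp [hE, h ω hE]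
  · simp [hE]

lemma CEx_congr' {Ω : Type*} [Fintype Ω] (p : Ω → ℝ) {X X' : Ω → ℝ} (E : Ω → Prop)
    (h : ∀ ω, E ω → p ω ≠ 0 → X ω = X' ω) : CEx p X E = CEx p X' E := by
  unfold CEx
  congr 1
  refine Finset.sum_congr rfl fun ω _ => ?_
  by_cases hE : E ω
  · by_cases hq : p ω = 0
    · simp [hE, hq]
    · simp [hE, h ω hE hq]
  · simp [hE]

lemma sum_ite_factor {Ω 𝕊 : Type*} [Fintype Ω] (p : Ω → ℝ) (S : Ω → 𝕊)
    (E : Ω → Prop) (g : 𝕊 → ℝ) :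
    (∑ ω, if E ω then p ω * g (S ω) else 0)
      = ∑ s ∈ Finset.univ.image S, g s * Pr p (fun ω => E ω ∧ S ω = s) := by
  unfold Pr
  simp_rw [Finset.mul_sum, mul_ite, mul_zero]
  rw [Finset.sum_comm]
  refine Finset.sum_congr rfl fun ω _ => ?_
  by_cases hE : E ω
  · simp only [hE, true_and]
    rw [Finset.sum_ite_eq (Finset.univ.image S) (S ω) (fun s => g s * p ω)]
    simp [Finset.mem_image_of_mem, hE, mul_comm]
  · simp [hE]

lemma inner_eq {Ω 𝕊 : Type*} [Fintype Ω] (p : Ω → ℝ) (S : Ω → 𝕊) (V : Ω → Prop)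
    (R : Ω → Bool) (g : 𝕊 → ℝ)
    (ha : Pr p V > 0) (hb : Pr p (fun ω => R ω = true ∧ V ω) > 0)
    (hs : ∀ s : 𝕊, Pr p (fun ω => (R ω = true ∧ V ω) ∧ S ω = s) * Pr p V
        = Pr p (fun ω => R ω = true ∧ V ω) * Pr p (fun ω => V ω ∧ S ω = s)) :
    CEx p (fun ω => g (S ω)) V = CEx p (fun ω => g (S ω)) (fun ω => R ω = true ∧ V ω) := by
  unfold CEx
  rw [sum_ite_factor p S V g, sum_ite_factor p S (fun ω => R ω = true ∧ V ω) g,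
    div_eq_div_iff ha.ne' hb.ne', Finset.sum_mul, Finset.sum_mul]
  refine Finset.sum_congr rfl fun s _ => ?_
  linear_combination (-(g s)) * hs s

/-- Lemma 1, discrete case: if `R ⟂ S | (W, A, C, CY)` and
`P(R = 1 | W, A, C, CY) > 0` on attained values, then for any function `f(W,S)`,
`E[ E[f(W,S) | W,A,C,CY] | A = a₂, W = w ] = E[ E[f(W,S) | R = 1, W,A,C,CY] | A = a₂, W = w ]`
for every `w` with `P(A = a₂, W = w) > 0`.  In particular, taking
`f(W,S) = E[Y | A = a₁, W, S]`, the nested regression `Q̄_{Q̄_Y(W,S)}(w)` equals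
`Q̃_{Q̃(W,A,C,CY)}(w)`. -/
theorem nested_condexp_tower {Ω 𝕎 𝕊 : Type*} [Fintype Ω]
    (p : Ω → ℝ) (hp : ∀ ω, 0 ≤ p ω) (hp1 : ∑ ω, p ω = 1)
    (W : Ω → 𝕎) (S : Ω → 𝕊) (A C Y R : Ω → Bool)
    (hCI : ∀ ω₀, Pr p (Vev W A C Y ω₀) > 0 → ∀ (r : Bool) (s : 𝕊),
      CPr p (fun ω => R ω = r ∧ S ω = s) (Vev W A C Y ω₀)
        = CPr p (fun ω => R ω = r) (Vev W A C Y ω₀)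
          * CPr p (fun ω => S ω = s) (Vev W A C Y ω₀))
    (hRpos : ∀ ω₀, Pr p (Vev W A C Y ω₀) > 0 →
      CPr p (fun ω => R ω = true) (Vev W A C Y ω₀) > 0)
    (f : 𝕎 → 𝕊 → ℝ) (a₂ : Bool) :
    ∀ w : 𝕎, Pr p (fun ω => A ω = a₂ ∧ W ω = w) > 0 →
      CEx p (fun ω₀ => CEx p (fun ω => f (W ω) (S ω)) (Vev W A C Y ω₀))
          (fun ω => A ω = a₂ ∧ W ω = w)
        = CEx p (fun ω₀ => CEx p (fun ω => f (W ω) (S ω))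
              (fun ω => R ω = true ∧ Vev W A C Y ω₀ ω))
            (fun ω => A ω = a₂ ∧ W ω = w) := by
  intro w _
  refine CEx_congr' p _ fun ω₀ _hE hp0' => ?_
  have hp0 : 0 < p ω₀ := lt_of_le_of_ne (hp ω₀) (Ne.symm hp0')
  have hV0 : Vev W A C Y ω₀ ω₀ := ⟨rfl, rfl, rfl, rfl⟩
  have ha : Pr p (Vev W A C Y ω₀) > 0 := by
    refine lt_of_lt_of_le hp0 ?_
    unfold Pr
    have := Finset.single_le_sum
      (f := fun ω => if Vev W A C Y ω₀ ω then p ω else 0)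
      (fun ω _ => by by_cases h : Vev W A C Y ω₀ ω <;> simp [h, hp ω]) (Finset.mem_univ ω₀)
    simpa [hV0] using this
  have hb : Pr p (fun ω => R ω = true ∧ Vev W A C Y ω₀ ω) > 0 := by
    have h := hRpos ω₀ ha
    unfold CPr at h
    by_contra hb
    push_neg at hb
    have : Pr p (fun ω => R ω = true ∧ Vev W A C Y ω₀ ω) / Pr p (Vev W A C Y ω₀) ≤ 0 :=
      div_nonpos_of_nonpos_of_nonneg hb ha.le
    linarith
  have hs : ∀ s : 𝕊,
      Pr p (fun ω => (R ω = true ∧ Vev W A C Y ω₀ ω) ∧ S ω = s) * Pr p (Vev W A C Y ω₀)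
        = Pr p (fun ω => R ω = true ∧ Vev W A C Y ω₀ ω)
          * Pr p (fun ω => Vev W A C Y ω₀ ω ∧ S ω = s) := by
    intro s
    have h := hCI ω₀ ha true s
    unfold CPr at h
    have h1 : Pr p (fun ω => (R ω = true ∧ S ω = s) ∧ Vev W A C Y ω₀ ω)
        = Pr p (fun ω => (R ω = true ∧ Vev W A C Y ω₀ ω) ∧ S ω = s) :=
      Pr_congr p (fun ω => by tauto)
    have h2 : Pr p (fun ω => S ω = s ∧ Vev W A C Y ω₀ ω)
        = Pr p (fun ω => Vev W A C Y ω₀ ω ∧ S ω = s) :=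
      Pr_congr p (fun ω => by tauto)
    rw [h1, h2] at h
    field_simp at h
    refine mul_right_cancel₀ ha.ne' ?_
    linear_combination (Pr p (Vev W A C Y ω₀)) * h
  have hf1 : CEx p (fun ω => f (W ω) (S ω)) (Vev W A C Y ω₀)
      = CEx p (fun ω => f (W ω₀) (S ω)) (Vev W A C Y ω₀) :=
    CEx_congr p _ (fun ω hω => by rw [hω.1])
  have hf2 : CEx p (fun ω => f (W ω) (S ω)) (fun ω => R ω = true ∧ Vev W A C Y ω₀ ω)
      = CEx p (fun ω => f (W ω₀) (S ω)) (fun ω => R ω = true ∧ Vev W A C Y ω₀ ω) :=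
    CEx_congr p _ (fun ω hω => by rw [hω.2.1])
  rw [hf1, hf2, inner_eq p S (Vev W A C Y ω₀) R (f (W ω₀)) ha hb hs]
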